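/- arXiv:1002.4280 — 3 statements merged into one kernel-verified Lean document; each statement's English description precedes it below -/
import Mathlib

section
/- For m ≥ 2 and any k ≥ 0, setting L = H(m) ⊕ A(k), the natural map L ∧ L → (L/H(m)²) ∧ (L/H(m)²) is an isomorphism; in particular L is not capable. -/
open Module Function

universe u v

/-! ### Product of Lie algebras -/

section ProdLie

variable (k : Type) [Field k]
variable (L₁ : Type*) (L₂ : Type*) [LieRing L₁] [LieRing L₂]

instance Prod.instLieRing : LieRing (L₁ × L₂) where
  bracket x y := (⁅x.1, y.1⁆, ⁅x.2, y.2⁆)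
  add_lie x y z := by ext <;> exact add_lie _ _ _
  lie_add x y z := by ext <;> exact lie_add _ _ _
  lie_self x := by ext <;> exact lie_self _
  leibniz_lie x y z := by ext <;> exact leibniz_lie _ _ _

instance Prod.instLieAlgebra [LieAlgebra k L₁] [LieAlgebra k L₂] :
    LieAlgebra k (L₁ × L₂) where
  lie_smul c x y := by ext <;> exact lie_smul _ _ _

end ProdLie

section Defs

variable (k : Type) [Field k]
variable (L : Type u) [LieRing L] [LieAlgebra k L]

/-- The derived subalgebra `L² = ⁅L, L⁆` as a Lie ideal. -/
def derived : LieIdeal k L := ⁅(⊤ : LieIdeal k L), (⊤ : LieIdeal k L)⁆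

/-- A Lie algebra is capable if it is isomorphic to `H / Z(H)` for some Lie algebra `H`. -/
def IsCapable : Prop :=
  ∃ (H : Type u) (_ : LieRing H) (_ : LieAlgebra k H),
    Nonempty (L ≃ₗ⁅k⁆ H ⧸ LieAlgebra.center k H)

/-- A surjective Lie algebra morphism with central kernel. -/
def IsCentralExtension {E : Type u} [LieRing E] [LieAlgebra k E] (φ : E →ₗ⁅k⁆ L) : Prop :=
  Function.Surjective φ ∧ φ.ker ≤ LieAlgebra.center k E

/-- The epicenter `Z^*(L)`: the intersection of the images `φ(Z(E))` over all central
extensions `φ : E → L`. -/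
def epicenter : LieIdeal k L :=
  sInf {I : LieIdeal k L |
    ∃ (E : Type u) (_ : LieRing E) (_ : LieAlgebra k E) (φ : E →ₗ⁅k⁆ L),
      IsCentralExtension k L φ ∧ (I : Set L) = φ '' (LieAlgebra.center k E)}

/-! ### The nonabelian exterior square -/

/-- The defining relations of the nonabelian exterior square of a Lie algebra. -/
def exteriorRels : Set (FreeLieAlgebra k (L × L)) :=
  {a | (∃ (x x' y : L), a = FreeLieAlgebra.of k (x + x', y) - FreeLieAlgebra.of k (x, y)
          - FreeLieAlgebra.of k (x', y)) ∨
       (∃ (x y y' : L), a = FreeLieAlgebra.of k (x, y + y') - FreeLieAlgebra.of k (x, y)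
          - FreeLieAlgebra.of k (x, y')) ∨
       (∃ (c : k) (x y : L), a = FreeLieAlgebra.of k (c • x, y) - c • FreeLieAlgebra.of k (x, y)) ∨
       (∃ (c : k) (x y : L), a = FreeLieAlgebra.of k (x, c • y) - c • FreeLieAlgebra.of k (x, y)) ∨
       (∃ (x x' y : L), a = FreeLieAlgebra.of k (⁅x, x'⁆, y) - FreeLieAlgebra.of k (x, ⁅x', y⁆)
          + FreeLieAlgebra.of k (x', ⁅x, y⁆)) ∨
       (∃ (x y y' : L), a = FreeLieAlgebra.of k (x, ⁅y, y'⁆) - FreeLieAlgebra.of k (⁅y', x⁆, y)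
          + FreeLieAlgebra.of k (⁅y, x⁆, y')) ∨
       (∃ (x y x' y' : L), a = ⁅FreeLieAlgebra.of k (x, y), FreeLieAlgebra.of k (x', y')⁆
          + FreeLieAlgebra.of k (⁅y, x⁆, ⁅x', y'⁆)) ∨
       (∃ (x : L), a = FreeLieAlgebra.of k (x, x))}

/-- The ideal of relations of the nonabelian exterior square. -/
noncomputable def exteriorIdeal : LieIdeal k (FreeLieAlgebra k (L × L)) :=
  LieSubmodule.lieSpan k _ (exteriorRels k L)

/-- The nonabelian exterior square `L ∧ L`. -/
abbrev ExteriorSquare := FreeLieAlgebra k (L × L) ⧸ exteriorIdeal k L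

variable {L} in
/-- The element `x ∧ y` of the nonabelian exterior square. -/
noncomputable def wedge (x y : L) : ExteriorSquare k L :=
  LieSubmodule.Quotient.mk' (exteriorIdeal k L) (FreeLieAlgebra.of k (x, y))

/-- The exterior center `Z^∧(L) = {x | x ∧ y = 0 for all y}`. -/
def exteriorCenter : Set L := {x | ∀ y : L, wedge k x y = 0}

end Defs

section Defs2

variable (k : Type) [Field k]
variable (L : Type u) [LieRing L] [LieAlgebra k L]

/-- The canonical free presentation `F(L) → L`. -/
noncomputable def pres : FreeLieAlgebra k L →ₗ⁅k⁆ L := FreeLieAlgebra.lift k id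

/-- The Schur multiplier computed from a presentation `ρ : F(L) → L'`,
namely `(ker ρ ∩ F²) / ⁅ker ρ, F⁆`. -/
abbrev multOf {L' : Type v} [LieRing L'] [LieAlgebra k L']
    (ρ : FreeLieAlgebra k L →ₗ⁅k⁆ L') : Type _ :=
  (ρ.ker ⊓ derived k (FreeLieAlgebra k L)).toSubmodule ⧸
    ((⁅ρ.ker, (⊤ : LieIdeal k (FreeLieAlgebra k L))⁆ :
        LieIdeal k (FreeLieAlgebra k L)).toSubmodule.comap
      (ρ.ker ⊓ derived k (FreeLieAlgebra k L)).toSubmodule.subtype)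

/-- The Schur multiplier `M(L) = (R ∩ F²)/⁅R, F⁆` for the canonical free
presentation `0 → R → F(L) → L → 0`. -/
noncomputable abbrev SchurMultiplier : Type _ := multOf k L (pres k L)

/-- The quotient map `L → L ⧸ N` as a morphism of Lie algebras. -/
def lieQuotMk (N : LieIdeal k L) : L →ₗ⁅k⁆ L ⧸ N :=
  { toLinearMap := (N : Submodule k L).mkQ
    map_lie' := rfl }

/-- The canonical presentation `F(L) → L ⧸ N` of a quotient of `L`. -/
noncomputable def presQ (N : LieIdeal k L) : FreeLieAlgebra k L →ₗ⁅k⁆ L ⧸ N :=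
  (lieQuotMk k L N).comp (pres k L)

end Defs2

section maps

variable (k : Type) [Field k]
variable (L : Type u) [LieRing L] [LieAlgebra k L]

lemma ker_le_kerQ (N : LieIdeal k L) : (pres k L).ker ≤ (presQ k L N).ker := by
  intro x hx
  rw [LieHom.mem_ker] at hx ⊢
  simp [presQ, LieHom.comp_apply, hx, lieQuotMk]

/-- The natural map `M(L) → M(L/N)` on Schur multipliers induced by a
(central) ideal `N` of `L`. -/
noncomputable def multMap (N : LieIdeal k L) :
    SchurMultiplier k L →ₗ[k] multOf k L (presQ k L N) :=
  Submodule.mapQ _ _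
    (Submodule.inclusion (by
      exact_mod_cast inf_le_inf_right (derived k (FreeLieAlgebra k L)) (ker_le_kerQ k L N)))
    (by
      intro x hx
      simp only [Submodule.mem_comap] at hx ⊢
      have hmono : (⁅(pres k L).ker, (⊤ : LieIdeal k (FreeLieAlgebra k L))⁆ :
          LieIdeal k (FreeLieAlgebra k L)) ≤
          ⁅(presQ k L N).ker, (⊤ : LieIdeal k (FreeLieAlgebra k L))⁆ :=
        LieSubmodule.mono_lie_left _ (ker_le_kerQ k L N)
      exact hmono hx)

end maps

section lift

variable {k : Type} [Field k]
variable {L : Type u} [LieRing L] [LieAlgebra k L]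
variable {L' : Type v} [LieRing L'] [LieAlgebra k L']

/-- Universal property of quotients of Lie algebras. -/
def lieQuotLift (I : LieIdeal k L) (f : L →ₗ⁅k⁆ L') (h : I ≤ f.ker) : (L ⧸ I) →ₗ⁅k⁆ L' :=
  { toLinearMap := (I : Submodule k L).liftQ f.toLinearMap (fun x hx => by
      have := h hx; rwa [LieHom.mem_ker] at this)
    map_lie' := by
      rintro ⟨x⟩ ⟨y⟩
      exact f.map_lie x y }

@[simp] lemma lieQuotLift_mk (I : LieIdeal k L) (f : L →ₗ⁅k⁆ L') (h : I ≤ f.ker) (x : L) :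
    lieQuotLift I f h (lieQuotMk k L I x) = f x := rfl

end lift

section extmaps

variable (k : Type) [Field k]
variable (L : Type u) [LieRing L] [LieAlgebra k L]

/-- `x ∧ y` rewritten via the quotient morphism. -/
lemma wedge_def (x y : L) :
    wedge k x y = lieQuotMk k _ (exteriorIdeal k L) (FreeLieAlgebra.of k (x, y)) := rfl

/-- The lift to the free Lie algebra of the map `(x, y) ↦ x ∧ y` valued in the
exterior square of a quotient of `L`. -/
noncomputable def extAux (N : LieIdeal k L) :
    FreeLieAlgebra k (L × L) →ₗ⁅k⁆ ExteriorSquare k (L ⧸ N) :=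
  FreeLieAlgebra.lift k fun p => wedge k (lieQuotMk k L N p.1) (lieQuotMk k L N p.2)

lemma wedge_mem_rel_zero {M : Type v} [LieRing M] [LieAlgebra k M]
    {a : FreeLieAlgebra k (M × M)} (ha : a ∈ exteriorRels k M) :
    lieQuotMk k _ (exteriorIdeal k M) a = 0 := by
  have h : a ∈ exteriorIdeal k M := LieSubmodule.subset_lieSpan ha
  show (exteriorIdeal k M : Submodule k (FreeLieAlgebra k (M × M))).mkQ a = 0
  rw [Submodule.mkQ_apply, Submodule.Quotient.mk_eq_zero]
  exact h

lemma extAux_rels (N : LieIdeal k L) : exteriorIdeal k L ≤ (extAux k L N).ker := by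
  rw [exteriorIdeal, LieSubmodule.lieSpan_le]
  intro a ha
  rw [SetLike.mem_coe, LieHom.mem_ker]
  set q := lieQuotMk k L N with hq
  have key : ∀ x y : L, extAux k L N (FreeLieAlgebra.of k (x, y)) =
      lieQuotMk k _ (exteriorIdeal k (L ⧸ N)) (FreeLieAlgebra.of k (q x, q y)) := by
    intro x y; rw [extAux, FreeLieAlgebra.lift_of_apply]; rfl
  obtain h|h|h|h|h|h|h|h := ha
  · obtain ⟨x, x', y, rfl⟩ := h
    simp only [map_sub, key]
    rw [← map_sub, ← map_sub]
    apply wedge_mem_rel_zero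
    exact Or.inl ⟨q x, q x', q y, by rw [map_add]⟩
  · obtain ⟨x, y, y', rfl⟩ := h
    simp only [map_sub, key]
    rw [← map_sub, ← map_sub]
    apply wedge_mem_rel_zero
    exact Or.inr (Or.inl ⟨q x, q y, q y', by rw [map_add]⟩)
  · obtain ⟨c, x, y, rfl⟩ := h
    simp only [map_sub, map_smul, key]
    rw [← map_smul (lieQuotMk k _ (exteriorIdeal k (L ⧸ N))) c
      (FreeLieAlgebra.of k (q x, q y)), ← map_sub]
    apply wedge_mem_rel_zero
    exact Or.inr (Or.inr (Or.inl ⟨c, q x, q y, rfl⟩))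
  · obtain ⟨c, x, y, rfl⟩ := h
    simp only [map_sub, map_smul, key]
    rw [← map_smul (lieQuotMk k _ (exteriorIdeal k (L ⧸ N))) c
      (FreeLieAlgebra.of k (q x, q y)), ← map_sub]
    apply wedge_mem_rel_zero
    exact Or.inr (Or.inr (Or.inr (Or.inl ⟨c, q x, q y, rfl⟩)))
  · obtain ⟨x, x', y, rfl⟩ := h
    simp only [map_sub, map_add, key]
    rw [← map_sub, ← map_add]
    apply wedge_mem_rel_zero
    refine Or.inr (Or.inr (Or.inr (Or.inr (Or.inl ⟨q x, q x', q y, ?_⟩))))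
    simp [LieHom.map_lie]
  · obtain ⟨x, y, y', rfl⟩ := h
    simp only [map_sub, map_add, key]
    rw [← map_sub, ← map_add]
    apply wedge_mem_rel_zero
    refine Or.inr (Or.inr (Or.inr (Or.inr (Or.inr (Or.inl ⟨q x, q y, q y', ?_⟩)))))
    simp [LieHom.map_lie]
  · obtain ⟨x, y, x', y', rfl⟩ := h
    simp only [map_add, LieHom.map_lie, key]
    rw [← LieHom.map_lie, ← map_add]
    apply wedge_mem_rel_zero
    refine Or.inr (Or.inr (Or.inr (Or.inr (Or.inr (Or.inr (Or.inl
      ⟨q x, q y, q x', q y', ?_⟩))))))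
    simp [LieHom.map_lie]
  · obtain ⟨x, rfl⟩ := h
    rw [key]
    apply wedge_mem_rel_zero
    exact Or.inr (Or.inr (Or.inr (Or.inr (Or.inr (Or.inr (Or.inr ⟨q x, rfl⟩))))))

/-- The natural morphism `L ∧ L → (L/N) ∧ (L/N)` of exterior squares. -/
noncomputable def extSqMap (N : LieIdeal k L) :
    ExteriorSquare k L →ₗ⁅k⁆ ExteriorSquare k (L ⧸ N) :=
  lieQuotLift (exteriorIdeal k L) (extAux k L N) (extAux_rels k L N)

/-- The commutator morphism `L ∧ L → L`, `x ∧ y ↦ ⁅x, y⁆`. -/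
noncomputable def commutatorMap : ExteriorSquare k L →ₗ⁅k⁆ L :=
  lieQuotLift (exteriorIdeal k L) (FreeLieAlgebra.lift k fun p : L × L => ⁅p.1, p.2⁆)
    (by
      rw [exteriorIdeal, LieSubmodule.lieSpan_le]
      intro a ha
      rw [SetLike.mem_coe, LieHom.mem_ker]
      obtain h|h|h|h|h|h|h|h := ha
      · obtain ⟨x, x', y, rfl⟩ := h
        simp [FreeLieAlgebra.lift_of_apply, add_lie]
      · obtain ⟨x, y, y', rfl⟩ := h
        simp [FreeLieAlgebra.lift_of_apply, lie_add]
      · obtain ⟨c, x, y, rfl⟩ := h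
        simp [FreeLieAlgebra.lift_of_apply, smul_lie]
      · obtain ⟨c, x, y, rfl⟩ := h
        simp [FreeLieAlgebra.lift_of_apply, lie_smul]
      · obtain ⟨x, x', y, rfl⟩ := h
        simp only [map_sub, map_add, FreeLieAlgebra.lift_of_apply, lie_lie]
        abel
      · obtain ⟨x, y, y', rfl⟩ := h
        simp only [map_sub, map_add, FreeLieAlgebra.lift_of_apply, lie_lie]
        rw [leibniz_lie x y' y, ← lie_skew y ⁅x, y'⁆]
        abel
      · obtain ⟨x, y, x', y', rfl⟩ := h
        simp only [map_add, LieHom.map_lie, FreeLieAlgebra.lift_of_apply]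
        rw [← lie_skew y x]
        simp
      · obtain ⟨x, rfl⟩ := h
        simp [FreeLieAlgebra.lift_of_apply])

end extmaps

section more

variable (k : Type) [Field k]
variable (L : Type u) [LieRing L] [LieAlgebra k L]

/-- A Lie algebra is a Heisenberg algebra `H(m)` (of dimension `2m + 1`) iff its derived
subalgebra coincides with its centre and is one-dimensional, and it has dimension `2m + 1`. -/
def IsHeisenberg (m : ℕ) : Prop :=
  derived k L = LieAlgebra.center k L ∧ Module.finrank k L = 2 * m + 1 ∧
    Module.finrank k (derived k L) = 1

/-- A vector space regarded as an abelian Lie algebra. -/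
def AbelianLieOf (V : Type v) : Type v := V

instance (V : Type v) [AddCommGroup V] : AddCommGroup (AbelianLieOf V) :=
  inferInstanceAs (AddCommGroup V)

instance (V : Type v) [AddCommGroup V] [Module k V] : Module k (AbelianLieOf V) :=
  inferInstanceAs (Module k V)

instance (V : Type v) [AddCommGroup V] : LieRing (AbelianLieOf V) where
  bracket _ _ := 0
  add_lie _ _ _ := by simp
  lie_add _ _ _ := by simp
  lie_self _ := rfl
  leibniz_lie _ _ _ := by simp

instance (V : Type v) [AddCommGroup V] [Module k V] : LieAlgebra k (AbelianLieOf V) where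
  lie_smul _ _ _ := by
    show (0 : AbelianLieOf V) = _ • (0 : AbelianLieOf V)
    simp

/-- A decomposition of `L` as the direct sum of a Heisenberg algebra `H(m)` and an
abelian Lie algebra of dimension `j`. -/
structure HeisenbergAbelianDecomp (m j : ℕ) where
  H : Type u
  A : Type u
  [instHL : LieRing H]
  [instHA : LieAlgebra k H]
  [instAL : LieRing A]
  [instAA : LieAlgebra k A]
  heis : IsHeisenberg k H m
  abel : IsLieAbelian A
  dimA : Module.finrank k A = j
  equiv : Nonempty (L ≃ₗ⁅k⁆ H × A)

/-- The projection `H × A → H` as a Lie algebra morphism. -/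
def lieFst (H A : Type u) [LieRing H] [LieAlgebra k H] [LieRing A] [LieAlgebra k A] :
    H × A →ₗ⁅k⁆ H :=
  { toLinearMap := LinearMap.fst k H A
    map_lie' := rfl }

end more

/-! ### Auxiliary development -/

section WedgeCalc

variable (k : Type) [Field k]
variable {L : Type u} [LieRing L] [LieAlgebra k L]

lemma wedge_add_left (x x' y : L) :
    wedge k (x + x') y = wedge k x y + wedge k x' y := by
  have h := wedge_mem_rel_zero k (M := L) (Or.inl ⟨x, x', y, rfl⟩)
  rw [map_sub, map_sub, sub_sub, sub_eq_zero] at h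
  exact h

lemma wedge_add_right (x y y' : L) :
    wedge k x (y + y') = wedge k x y + wedge k x y' := by
  have h := wedge_mem_rel_zero k (M := L) (Or.inr (Or.inl ⟨x, y, y', rfl⟩))
  rw [map_sub, map_sub, sub_sub, sub_eq_zero] at h
  exact h

lemma wedge_smul_left (c : k) (x y : L) :
    wedge k (c • x) y = c • wedge k x y := by
  have h := wedge_mem_rel_zero k (M := L) (Or.inr (Or.inr (Or.inl ⟨c, x, y, rfl⟩)))
  rw [map_sub, map_smul, sub_eq_zero] at h
  exact h

lemma wedge_smul_right (c : k) (x y : L) :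
    wedge k x (c • y) = c • wedge k x y := by
  have h := wedge_mem_rel_zero k (M := L) (Or.inr (Or.inr (Or.inr (Or.inl ⟨c, x, y, rfl⟩))))
  rw [map_sub, map_smul, sub_eq_zero] at h
  exact h

lemma wedge_lie_left (x x' y : L) :
    wedge k ⁅x, x'⁆ y = wedge k x ⁅x', y⁆ - wedge k x' ⁅x, y⁆ := by
  have h := wedge_mem_rel_zero k (M := L)
    (Or.inr (Or.inr (Or.inr (Or.inr (Or.inl ⟨x, x', y, rfl⟩)))))
  rw [map_add, map_sub] at h
  rw [eq_sub_iff_add_eq]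
  rwa [sub_add_eq_add_sub, sub_eq_zero] at h

lemma wedge_lie_right (x y y' : L) :
    wedge k x ⁅y, y'⁆ = wedge k ⁅y', x⁆ y - wedge k ⁅y, x⁆ y' := by
  have h := wedge_mem_rel_zero k (M := L)
    (Or.inr (Or.inr (Or.inr (Or.inr (Or.inr (Or.inl ⟨x, y, y', rfl⟩))))))
  rw [map_add, map_sub] at h
  rw [eq_sub_iff_add_eq]
  rwa [sub_add_eq_add_sub, sub_eq_zero] at h

lemma wedge_self (x : L) : wedge k x x = 0 := by
  exact wedge_mem_rel_zero k (M := L)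
    (Or.inr (Or.inr (Or.inr (Or.inr (Or.inr (Or.inr (Or.inr ⟨x, rfl⟩)))))))

lemma lie_wedge_wedge (x y x' y' : L) :
    ⁅wedge k x y, wedge k x' y'⁆ = - wedge k ⁅y, x⁆ ⁅x', y'⁆ := by
  have h := wedge_mem_rel_zero k (M := L)
    (Or.inr (Or.inr (Or.inr (Or.inr (Or.inr (Or.inr (Or.inl ⟨x, y, x', y', rfl⟩)))))))
  rw [map_add, LieHom.map_lie] at h
  exact eq_neg_of_add_eq_zero_left h

lemma wedge_zero_left (y : L) : wedge k (0 : L) y = 0 := by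
  have h := wedge_smul_left k (0 : k) (0 : L) y
  rwa [zero_smul, zero_smul] at h

lemma wedge_zero_right (x : L) : wedge k x (0 : L) = 0 := by
  have h := wedge_smul_right k (0 : k) x (0 : L)
  rwa [zero_smul, zero_smul] at h

lemma wedge_antisymm (x y : L) : wedge k y x = - wedge k x y := by
  have h := wedge_self k (x + y)
  rw [wedge_add_left, wedge_add_right, wedge_add_right, wedge_self, wedge_self] at h
  rw [zero_add, add_zero] at h
  rw [add_eq_zero_iff_eq_neg] at h
  rw [h, neg_neg]

end WedgeCalc

section DerivedSpan

variable (k : Type) [Field k]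
variable {L : Type u} [LieRing L] [LieAlgebra k L]

/-- If every bracket is a multiple of `z0`, then so is every element of the derived ideal. -/
lemma derived_eq_multiple (z0 : L) (hz0 : ∀ x y : L, ∃ c : k, ⁅x, y⁆ = c • z0) :
    ∀ z ∈ derived k L, ∃ c : k, z = c • z0 := by
  let N : LieIdeal k L :=
    { Submodule.span k {z0} with
      lie_mem := by
        intro x m hm
        have hm' : m ∈ Submodule.span k {z0} := hm
        rw [Submodule.mem_span_singleton] at hm'
        obtain ⟨c, rfl⟩ := hm'
        show ⁅x, c • z0⁆ ∈ Submodule.span k {z0}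
        obtain ⟨e, he⟩ := hz0 x z0
        rw [lie_smul, he, smul_smul]
        exact Submodule.smul_mem _ _ (Submodule.mem_span_singleton_self z0) }
  have hle : derived k L ≤ N := by
    rw [derived, LieSubmodule.lieIdeal_oper_eq_span, LieSubmodule.lieSpan_le]
    rintro z ⟨⟨x, -⟩, ⟨y, -⟩, rfl⟩
    obtain ⟨c, hc⟩ := hz0 x y
    show ⁅x, y⁆ ∈ Submodule.span k {z0}
    rw [hc]
    exact Submodule.smul_mem _ _ (Submodule.mem_span_singleton_self z0)
  intro z hz
  have : z ∈ Submodule.span k {z0} := hle hz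
  rw [Submodule.mem_span_singleton] at this
  obtain ⟨c, hc⟩ := this
  exact ⟨c, hc.symm⟩

end DerivedSpan

section KeyWedge

variable (k : Type) [Field k]
variable {L : Type u} [LieRing L] [LieAlgebra k L]

/-- The key computation: given a "partial symplectic basis" `a, b, c, d` with
`⁅a,b⁆ = ⁅c,d⁆ = z0`, the pairs orthogonal, and every bracket a multiple of `z0`,
the element `z0` lies in the exterior center. -/
lemma wedge_z0_eq_zero (z0 a b c d : L)
    (hab : ⁅a, b⁆ = z0) (hcd : ⁅c, d⁆ = z0)
    (hca : ⁅c, a⁆ = 0) (hcb : ⁅c, b⁆ = 0) (hda : ⁅d, a⁆ = 0) (hdb : ⁅d, b⁆ = 0)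
    (hmult : ∀ x y : L, ∃ e : k, ⁅x, y⁆ = e • z0) :
    ∀ y : L, wedge k z0 y = 0 := by
  have haz : wedge k a z0 = 0 := by
    rw [← hcd, wedge_lie_right, hda, hca, wedge_zero_left, wedge_zero_left, sub_zero]
  have hbz : wedge k b z0 = 0 := by
    rw [← hcd, wedge_lie_right, hdb, hcb, wedge_zero_left, wedge_zero_left, sub_zero]
  intro y
  obtain ⟨e₁, he₁⟩ := hmult b y
  obtain ⟨e₂, he₂⟩ := hmult a y
  rw [← hab, wedge_lie_left, he₁, he₂, wedge_smul_right, wedge_smul_right, haz, hbz,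
    smul_zero, smul_zero, sub_zero]

end KeyWedge

section Bijective

variable (k : Type) [Field k]
variable {L : Type u} [LieRing L] [LieAlgebra k L]

lemma freeLieHom_ext {X : Type u} {M : Type v} [LieRing M] [LieAlgebra k M]
    {f g : FreeLieAlgebra k X →ₗ⁅k⁆ M}
    (h : ∀ x, f (FreeLieAlgebra.of k x) = g (FreeLieAlgebra.of k x)) : f = g := by
  have h2 : (FreeLieAlgebra.lift k).symm f = (FreeLieAlgebra.lift k).symm g := by
    funext x
    simpa [FreeLieAlgebra.lift_symm_apply] using h x
  calc f = FreeLieAlgebra.lift k ((FreeLieAlgebra.lift k).symm f) :=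
        ((FreeLieAlgebra.lift k).apply_symm_apply f).symm
    _ = FreeLieAlgebra.lift k ((FreeLieAlgebra.lift k).symm g) := by rw [h2]
    _ = g := (FreeLieAlgebra.lift k).apply_symm_apply g

lemma extSqMap_wedge (N : LieIdeal k L) (x y : L) :
    extSqMap k L N (wedge k x y) =
      wedge k (lieQuotMk k L N x) (lieQuotMk k L N y) := by
  rw [wedge_def, extSqMap, lieQuotLift_mk, extAux, FreeLieAlgebra.lift_of_apply]

lemma quot_derived_lie_eq_zero (u v : L ⧸ derived k L) : ⁅u, v⁆ = 0 := by
  obtain ⟨x, rfl⟩ := Submodule.Quotient.mk_surjective _ u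
  obtain ⟨y, rfl⟩ := Submodule.Quotient.mk_surjective _ v
  have h1 : (Submodule.Quotient.mk x : L ⧸ derived k L) = lieQuotMk k L (derived k L) x := rfl
  have h2 : (Submodule.Quotient.mk y : L ⧸ derived k L) = lieQuotMk k L (derived k L) y := rfl
  rw [h1, h2, ← LieHom.map_lie]
  show (((derived k L) : Submodule k L)).mkQ ⁅x, y⁆ = 0
  rw [Submodule.mkQ_apply, Submodule.Quotient.mk_eq_zero]
  exact LieSubmodule.lie_mem_lie (LieSubmodule.mem_top x) (LieSubmodule.mem_top y)

/-- If the derived ideal lies in the exterior center, the natural map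
`L ∧ L → (L/L²) ∧ (L/L²)` is bijective. -/
lemma extSqMap_derived_bijective
    (hkey : ∀ z ∈ derived k L, ∀ y : L, wedge k z y = 0) :
    Function.Bijective (extSqMap k L (derived k L)) := by
  set I := derived k L with hI
  have hkey' : ∀ z ∈ I, ∀ y : L, wedge k y z = 0 := by
    intro z hz y
    rw [wedge_antisymm, hkey z hz y, neg_zero]
  -- a linear section of the quotient map
  obtain ⟨s, hs⟩ := (LieSubmodule.toSubmodule I).mkQ.exists_rightInverse_of_surjective
    (LinearMap.range_eq_top.mpr (Submodule.mkQ_surjective _))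
  have hs' : ∀ u : L ⧸ I, lieQuotMk k L I (s u) = u := fun u => LinearMap.congr_fun hs u
  -- the auxiliary lift
  set ψaux : FreeLieAlgebra k ((L ⧸ I) × (L ⧸ I)) →ₗ⁅k⁆ ExteriorSquare k L :=
    FreeLieAlgebra.lift k (fun p => wedge k (s p.1) (s p.2)) with hψaux
  have ψaux_of : ∀ u v : L ⧸ I, ψaux (FreeLieAlgebra.of k (u, v)) = wedge k (s u) (s v) := by
    intro u v; rw [hψaux, FreeLieAlgebra.lift_of_apply]
  have hsmem : ∀ u : L ⧸ I, ∀ x : L, lieQuotMk k L I x = u → s u - x ∈ I := by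
    intro u x hx
    have : lieQuotMk k L I (s u - x) = 0 := by
      rw [map_sub, hs' u, hx, sub_self]
    change ((I : Submodule k L)).mkQ (s u - x) = 0 at this
    rwa [Submodule.mkQ_apply, Submodule.Quotient.mk_eq_zero] at this
  -- wedge only depends on the class mod I
  have hwedge_congr : ∀ x y : L, wedge k (s (lieQuotMk k L I x)) (s (lieQuotMk k L I y)) =
      wedge k x y := by
    intro x y
    have hn : s (lieQuotMk k L I x) - x ∈ I := hsmem _ x rfl
    have hn' : s (lieQuotMk k L I y) - y ∈ I := hsmem _ y rfl
    have e1 : s (lieQuotMk k L I x) = x + (s (lieQuotMk k L I x) - x) := by abel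
    have e2 : s (lieQuotMk k L I y) = y + (s (lieQuotMk k L I y) - y) := by abel
    rw [e1, e2, wedge_add_left, wedge_add_right, wedge_add_right,
      hkey _ hn _, hkey _ hn _, hkey' _ hn' _, add_zero, add_zero, add_zero]
  -- brackets of wedges vanish
  have hbr : ∀ x y x' y' : L, ⁅wedge k x y, wedge k x' y'⁆ = 0 := by
    intro x y x' y'
    rw [lie_wedge_wedge, hkey ⁅y, x⁆
      (LieSubmodule.lie_mem_lie (LieSubmodule.mem_top y) (LieSubmodule.mem_top x)) _, neg_zero]
  -- ψaux kills the relations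
  have hrel : exteriorIdeal k (L ⧸ I) ≤ ψaux.ker := by
    rw [exteriorIdeal, LieSubmodule.lieSpan_le]
    intro r hr
    rw [SetLike.mem_coe, LieHom.mem_ker]
    obtain h|h|h|h|h|h|h|h := hr
    · obtain ⟨u, u', v, rfl⟩ := h
      rw [map_sub, map_sub, ψaux_of, ψaux_of, ψaux_of, map_add, wedge_add_left]
      abel
    · obtain ⟨u, v, v', rfl⟩ := h
      rw [map_sub, map_sub, ψaux_of, ψaux_of, ψaux_of, map_add, wedge_add_right]
      abel
    · obtain ⟨c, u, v, rfl⟩ := h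
      rw [map_sub, map_smul, ψaux_of, ψaux_of, map_smul, wedge_smul_left, sub_self]
    · obtain ⟨c, u, v, rfl⟩ := h
      rw [map_sub, map_smul, ψaux_of, ψaux_of, map_smul, wedge_smul_right, sub_self]
    · obtain ⟨u, u', v, rfl⟩ := h
      rw [map_add, map_sub, ψaux_of, ψaux_of, ψaux_of,
        quot_derived_lie_eq_zero k u u', quot_derived_lie_eq_zero k u' v,
        quot_derived_lie_eq_zero k u v, map_zero, wedge_zero_left, wedge_zero_right,
        wedge_zero_right]
      abel
    · obtain ⟨u, v, v', rfl⟩ := h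
      rw [map_add, map_sub, ψaux_of, ψaux_of, ψaux_of,
        quot_derived_lie_eq_zero k v v', quot_derived_lie_eq_zero k v' u,
        quot_derived_lie_eq_zero k v u, map_zero, wedge_zero_left, wedge_zero_left,
        wedge_zero_right]
      abel
    · obtain ⟨u, v, u', v', rfl⟩ := h
      rw [map_add, LieHom.map_lie, ψaux_of, ψaux_of, ψaux_of, hbr,
        quot_derived_lie_eq_zero k v u, quot_derived_lie_eq_zero k u' v', map_zero,
        wedge_zero_left, add_zero]
    · obtain ⟨u, rfl⟩ := h
      rw [ψaux_of, wedge_self]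
  set ψ : ExteriorSquare k (L ⧸ I) →ₗ⁅k⁆ ExteriorSquare k L :=
    lieQuotLift (exteriorIdeal k (L ⧸ I)) ψaux hrel with hψ
  have ψ_wedge : ∀ u v : L ⧸ I, ψ (wedge k u v) = wedge k (s u) (s v) := by
    intro u v
    rw [hψ, wedge_def, lieQuotLift_mk, ψaux_of]
  -- surjectivity of the two quotient maps
  have hsurj1 : Function.Surjective (lieQuotMk k _ (exteriorIdeal k L)) :=
    Submodule.mkQ_surjective _
  have hsurj2 : Function.Surjective (lieQuotMk k _ (exteriorIdeal k (L ⧸ I))) :=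
    Submodule.mkQ_surjective _
  -- left inverse
  have hleft : Function.LeftInverse ψ (extSqMap k L I) := by
    have heq : (ψ.comp (extSqMap k L I)).comp (lieQuotMk k _ (exteriorIdeal k L)) =
        lieQuotMk k _ (exteriorIdeal k L) := by
      apply freeLieHom_ext k
      rintro ⟨x, y⟩
      show ψ (extSqMap k L I (wedge k x y)) = wedge k x y
      rw [extSqMap_wedge, ψ_wedge, hwedge_congr]
    intro t
    obtain ⟨q, rfl⟩ := hsurj1 t
    exact DFunLike.congr_fun heq q
  -- right inverse
  have hright : Function.RightInverse ψ (extSqMap k L I) := by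
    have heq : ((extSqMap k L I).comp ψ).comp (lieQuotMk k _ (exteriorIdeal k (L ⧸ I))) =
        lieQuotMk k _ (exteriorIdeal k (L ⧸ I)) := by
      apply freeLieHom_ext k
      rintro ⟨u, v⟩
      show extSqMap k L I (ψ (wedge k u v)) = wedge k u v
      rw [ψ_wedge, extSqMap_wedge, hs' u, hs' v]
    intro t
    obtain ⟨q, rfl⟩ := hsurj2 t
    exact DFunLike.congr_fun heq q
  exact Function.bijective_iff_has_inverse.mpr ⟨ψ, hleft, hright⟩

end Bijective

section NotCapable

variable (k : Type) [Field k]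
variable {L : Type u} [LieRing L] [LieAlgebra k L]

/-- If `L` contains a nonzero element `z0` admitting a partial symplectic basis as above,
then `L` is not capable. -/
lemma not_capable_of_partial_symplectic (z0 a b c d : L) (hne : z0 ≠ 0)
    (hab : ⁅a, b⁆ = z0) (hcd : ⁅c, d⁆ = z0)
    (hac : ⁅a, c⁆ = 0) (had : ⁅a, d⁆ = 0) (hbc : ⁅b, c⁆ = 0) (hbd : ⁅b, d⁆ = 0)
    (hmult : ∀ x y : L, ∃ e : k, ⁅x, y⁆ = e • z0) :
    ¬ IsCapable k L := by
  rintro ⟨E, _, _, ⟨ι⟩⟩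
  set Z := LieAlgebra.center k E with hZ
  set mk : E →ₗ⁅k⁆ E ⧸ Z := lieQuotMk k E Z with hmk
  have hmksurj : Function.Surjective mk := Submodule.mkQ_surjective _
  have hcent : ∀ w : E, mk w = 0 → ∀ f : E, ⁅w, f⁆ = 0 := by
    intro w hw f
    have hwZ : w ∈ Z := by
      change ((Z : Submodule k E)).mkQ w = 0 at hw
      rwa [Submodule.mkQ_apply, Submodule.Quotient.mk_eq_zero] at hw
    have := (LieModule.mem_maxTrivSubmodule k E E w).mp hwZ f
    rw [← lie_skew, this, neg_zero]
  -- lifts of elements of L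
  choose e he using fun x : L => hmksurj (ι x)
  have hbrk : ∀ x y : L, mk ⁅e x, e y⁆ = ι ⁅x, y⁆ := by
    intro x y
    rw [LieHom.map_lie, he, he, ← LieEquiv.map_lie]
  -- brackets of lifts of commuting elements are central
  have hcomm : ∀ x y : L, ⁅x, y⁆ = 0 → ∀ f : E, ⁅⁅e x, e y⁆, f⁆ = 0 := by
    intro x y hxy f
    apply hcent
    rw [hbrk, hxy, show ι (0 : L) = 0 from ι.toLinearEquiv.map_zero]
  -- ⁅e x, ⁅e c, e d⁆⁆ = 0 whenever x commutes with c and d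
  have hAZ : ∀ x : L, ⁅x, c⁆ = 0 → ⁅x, d⁆ = 0 → ⁅e x, ⁅e c, e d⁆⁆ = 0 := by
    intro x hxc hxd
    rw [leibniz_lie, hcomm x c hxc (e d), zero_add, ← lie_skew, hcomm x d hxd (e c), neg_zero]
  have key : ∀ (f : E) (x y : L), ⁅x, c⁆ = 0 → ⁅x, d⁆ = 0 → ⁅e x, ⁅e y, f⁆⁆ = 0 := by
    intro f x y hxc hxd
    obtain ⟨γ, hγ⟩ := hmult y (ι.symm (mk f))
    have hc0 : mk (⁅e y, f⁆ - γ • ⁅e c, e d⁆) = 0 := by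
      have h2 : ι (ι.symm (mk f)) = mk f := ι.apply_symm_apply _
      rw [map_sub, map_smul, hbrk c d, hcd, LieHom.map_lie, he y, ← h2,
        ← LieEquiv.map_lie, hγ, show ι (γ • z0) = γ • ι z0 from ι.toLinearEquiv.map_smul γ z0,
        sub_self]
    have hsplit : ⁅e y, f⁆ = γ • ⁅e c, e d⁆ + (⁅e y, f⁆ - γ • ⁅e c, e d⁆) := by abel
    rw [hsplit, lie_add, lie_smul, hAZ x hxc hxd, smul_zero, zero_add, ← lie_skew,
      hcent _ hc0 (e x), neg_zero]
  have hwcent : ∀ f : E, ⁅⁅e a, e b⁆, f⁆ = 0 := by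
    intro f
    rw [lie_lie, key f a b hac had, key f b a hbc hbd, sub_zero]
  have hmk0 : mk ⁅e a, e b⁆ = 0 := by
    have hmem : ⁅e a, e b⁆ ∈ Z := by
      rw [hZ]
      exact (LieModule.mem_maxTrivSubmodule k E E _).mpr
        (fun x => by rw [← lie_skew, hwcent x, neg_zero])
    change ((Z : Submodule k E)).mkQ ⁅e a, e b⁆ = 0
    rwa [Submodule.mkQ_apply, Submodule.Quotient.mk_eq_zero]
  rw [hbrk a b, hab] at hmk0
  apply hne
  have h0 : ι z0 = ι 0 := by
    rw [hmk0, show ι (0 : L) = 0 from ι.toLinearEquiv.map_zero]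
  exact ι.injective h0

end NotCapable

section HeisStruct

variable (k : Type) [Field k]
variable {H : Type u} [LieRing H] [LieAlgebra k H] [Module.Finite k H]

lemma heisenberg_partial_symplectic {m : ℕ} (hm : 2 ≤ m) (hH : IsHeisenberg k H m) :
    ∃ z0 a b c d : H, z0 ≠ 0 ∧ ⁅a, b⁆ = z0 ∧ ⁅c, d⁆ = z0 ∧
      ⁅a, c⁆ = 0 ∧ ⁅a, d⁆ = 0 ∧ ⁅b, c⁆ = 0 ∧ ⁅b, d⁆ = 0 ∧
      ∀ x y : H, ∃ e : k, ⁅x, y⁆ = e • z0 := by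
  obtain ⟨hcen, hdim, hder⟩ := hH
  -- there is a nonzero bracket
  have hex : ∃ a b : H, ⁅a, b⁆ ≠ 0 := by
    by_contra hcon
    push_neg at hcon
    have hbot : derived k H = ⊥ := by
      rw [derived, eq_bot_iff, LieSubmodule.lieIdeal_oper_eq_span, LieSubmodule.lieSpan_le]
      rintro z ⟨⟨x, -⟩, ⟨y, -⟩, rfl⟩
      simp [hcon]
    rw [hbot] at hder
    have : Subsingleton (⊥ : LieIdeal k H) := by
      constructor
      rintro ⟨x, hx⟩ ⟨y, hy⟩
      rw [LieSubmodule.mem_bot] at hx hy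
      simp [hx, hy]
    rw [finrank_zero_of_subsingleton] at hder
    exact absurd hder (by norm_num)
  obtain ⟨a, b, hz⟩ := hex
  set z0 := ⁅a, b⁆ with hz0
  have hz0mem : z0 ∈ derived k H :=
    LieSubmodule.lie_mem_lie (LieSubmodule.mem_top a) (LieSubmodule.mem_top b)
  -- derived = span {z0}
  have hspan : ((derived k H : LieIdeal k H) : Submodule k H) = Submodule.span k {z0} := by
    symm
    apply Submodule.eq_of_le_of_finrank_le
    · rw [Submodule.span_le, Set.singleton_subset_iff]
      exact hz0mem
    · rw [finrank_span_singleton hz]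
      exact le_of_eq hder
  have hmult : ∀ x y : H, ∃ e : k, ⁅x, y⁆ = e • z0 := by
    intro x y
    have hmem : ⁅x, y⁆ ∈ Submodule.span k {z0} := by
      rw [← hspan]
      exact LieSubmodule.lie_mem_lie (LieSubmodule.mem_top x) (LieSubmodule.mem_top y)
    rw [Submodule.mem_span_singleton] at hmem
    obtain ⟨e, he⟩ := hmem
    exact ⟨e, he.symm⟩
  -- kernels of ad a and ad b are large
  have hkerdim : ∀ u : H, 2 * m ≤ finrank k (LinearMap.ker (LieAlgebra.ad k H u)) := by
    intro u
    have h1 := LinearMap.finrank_range_add_finrank_ker (LieAlgebra.ad k H u)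
    have h2 : finrank k (LinearMap.range (LieAlgebra.ad k H u)) ≤ 1 := by
      have hle : LinearMap.range (LieAlgebra.ad k H u) ≤ Submodule.span k {z0} := by
        rintro _ ⟨x, rfl⟩
        rw [LieAlgebra.ad_apply]
        obtain ⟨e, he⟩ := hmult u x
        rw [he]
        exact Submodule.smul_mem _ _ (Submodule.mem_span_singleton_self z0)
      calc finrank k (LinearMap.range (LieAlgebra.ad k H u))
          ≤ finrank k (Submodule.span k {z0}) := Submodule.finrank_mono hle
        _ = 1 := finrank_span_singleton hz
    rw [hdim] at h1
    omega
  set Ka := LinearMap.ker (LieAlgebra.ad k H a) with hKa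
  set Kb := LinearMap.ker (LieAlgebra.ad k H b) with hKb
  have hWdim : 2 * m - 1 ≤ finrank k ↥(Ka ⊓ Kb) := by
    have h3 := Submodule.finrank_sup_add_finrank_inf_eq Ka Kb
    have h4 : finrank k ↥(Ka ⊔ Kb) ≤ finrank k H := Submodule.finrank_le _
    have h5 : 2 * m ≤ finrank k Ka := hkerdim a
    have h6 : 2 * m ≤ finrank k Kb := hkerdim b
    rw [hdim] at h4
    omega
  -- brackets vanish on elements of the kernels
  have hKaKb : ∀ w ∈ Ka ⊓ Kb, ⁅a, w⁆ = 0 ∧ ⁅b, w⁆ = 0 := by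
    intro w hw
    rw [Submodule.mem_inf, hKa, hKb, LinearMap.mem_ker, LinearMap.mem_ker] at hw
    rw [← LieAlgebra.ad_apply (R := k), ← LieAlgebra.ad_apply (R := k)]
    exact hw
  -- W is not totally isotropic
  have hW : ∃ c0 ∈ Ka ⊓ Kb, ∃ d0 ∈ Ka ⊓ Kb, ⁅c0, d0⁆ ≠ 0 := by
    by_contra hcon
    push_neg at hcon
    have hba : ⁅b, a⁆ = -z0 := by
      rw [← lie_skew, ← hz0]
    have hWle : Ka ⊓ Kb ≤ Submodule.span k {z0} := by
      intro w hw
      rw [← hspan, LieIdeal.toLieSubalgebra_toSubmodule, LieSubmodule.mem_toSubmodule,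
        hcen]
      refine (LieModule.mem_maxTrivSubmodule k H H w).mpr fun x => ?_
      obtain ⟨p, hp⟩ := hmult a x
      obtain ⟨q, hq⟩ := hmult b x
      have hu : x - (-q) • a - p • b ∈ Ka ⊓ Kb := by
        rw [Submodule.mem_inf, hKa, hKb, LinearMap.mem_ker, LinearMap.mem_ker,
          LieAlgebra.ad_apply, LieAlgebra.ad_apply]
        constructor
        · rw [lie_sub, lie_sub, lie_smul, lie_smul, hp, lie_self, smul_zero, sub_zero,
            ← hz0]
          exact sub_self _
        · rw [lie_sub, lie_sub, lie_smul, lie_smul, hq, lie_self, smul_zero, sub_zero,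
            hba, smul_neg, neg_smul, neg_neg]
          exact sub_self _
      have hx : x = (x - (-q) • a - p • b) + ((-q) • a + p • b) := by abel
      rw [hx, add_lie, add_lie, smul_lie, smul_lie, hcon _ hu w hw,
        (hKaKb w hw).1, (hKaKb w hw).2, smul_zero, smul_zero, add_zero, add_zero]
    have hle1 : finrank k ↥(Ka ⊓ Kb) ≤ 1 := by
      calc finrank k ↥(Ka ⊓ Kb) ≤ finrank k (Submodule.span k {z0}) :=
            Submodule.finrank_mono hWle
        _ = 1 := finrank_span_singleton hz
    omega
  obtain ⟨c0, hc0, d0, hd0, hcd0⟩ := hW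
  obtain ⟨γ, hγ⟩ := hmult c0 d0
  have hγne : γ ≠ 0 := by
    rintro rfl
    rw [zero_smul] at hγ
    exact hcd0 hγ
  refine ⟨z0, a, b, c0, γ⁻¹ • d0, hz, rfl, ?_, ?_, ?_, ?_, ?_, hmult⟩
  · rw [lie_smul, hγ, smul_smul, inv_mul_cancel₀ hγne, one_smul]
  · exact (hKaKb c0 hc0).1
  · rw [lie_smul, (hKaKb d0 hd0).1, smul_zero]
  · exact (hKaKb c0 hc0).2
  · rw [lie_smul, (hKaKb d0 hd0).2, smul_zero]

end HeisStruct



/-- for `m ≥ 2` and `L = H(m) ⊕ A(j)`, the natural map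
`L ∧ L → (L/H(m)²) ∧ (L/H(m)²)` (where `H(m)² = L²`) is an isomorphism;
in particular `L` is not capable. -/
theorem heisenberg_sum_abelian_not_capable (k : Type) [Field k] (H A : Type u) [LieRing H]
    [LieAlgebra k H] [LieRing A] [LieAlgebra k A] [Module.Finite k H] [Module.Finite k A]
    (m j : ℕ) (hm : 2 ≤ m) (hH : IsHeisenberg k H m) (hA : IsLieAbelian A)
    (hAd : Module.finrank k A = j) :
    Function.Bijective (extSqMap k (H × A) (derived k (H × A))) ∧
    ¬ IsCapable k (H × A) := by
  obtain ⟨z0, a, b, c, d, hne, hab, hcd, hac, had, hbc, hbd, hmult⟩ :=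
    heisenberg_partial_symplectic k hm hH
  -- transfer everything to L = H × A
  have hbrL : ∀ x y : H × A, ⁅x, y⁆ = (⁅x.1, y.1⁆, 0) := by
    intro x y
    show (⁅x.1, y.1⁆, ⁅x.2, y.2⁆) = (⁅x.1, y.1⁆, 0)
    rw [hA.trivial x.2 y.2]
  have hbrL' : ∀ (x y : H) (u v : A), ⁅((x, u) : H × A), ((y, v) : H × A)⁆ = (⁅x, y⁆, 0) :=
    fun x y u v => hbrL (x, u) (y, v)
  set z0L : H × A := (z0, 0) with hz0L
  have hneL : z0L ≠ 0 := by
    intro hcontra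
    exact hne (congrArg Prod.fst hcontra)
  have hmultL : ∀ x y : H × A, ∃ e : k, ⁅x, y⁆ = e • z0L := by
    intro x y
    obtain ⟨e, he⟩ := hmult x.1 y.1
    refine ⟨e, ?_⟩
    rw [hbrL, he, hz0L, Prod.smul_mk, smul_zero]
  have hPair : ∀ x y : H, ⁅x, y⁆ = z0 → ⁅((x, 0) : H × A), ((y, 0) : H × A)⁆ = z0L := by
    intro x y hxy
    rw [hbrL' x y 0 0, hxy, hz0L]
  have hZero : ∀ x y : H, ⁅x, y⁆ = 0 → ⁅((x, 0) : H × A), ((y, 0) : H × A)⁆ = 0 := by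
    intro x y hxy
    rw [hbrL' x y 0 0, hxy]
    exact Prod.mk_zero_zero
  have habL := hPair a b hab
  have hcdL := hPair c d hcd
  have hacL := hZero a c hac
  have hadL := hZero a d had
  have hbcL := hZero b c hbc
  have hbdL := hZero b d hbd
  have hcaL : ⁅((c, 0) : H × A), ((a, 0) : H × A)⁆ = 0 := by
    rw [← lie_skew, hacL, neg_zero]
  have hcbL : ⁅((c, 0) : H × A), ((b, 0) : H × A)⁆ = 0 := by
    rw [← lie_skew, hbcL, neg_zero]
  have hdaL : ⁅((d, 0) : H × A), ((a, 0) : H × A)⁆ = 0 := by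
    rw [← lie_skew, hadL, neg_zero]
  have hdbL : ⁅((d, 0) : H × A), ((b, 0) : H × A)⁆ = 0 := by
    rw [← lie_skew, hbdL, neg_zero]
  have hkey : ∀ z ∈ derived k (H × A), ∀ y : H × A, wedge k z y = 0 := by
    intro z hz y
    obtain ⟨e, rfl⟩ := derived_eq_multiple k z0L hmultL z hz
    rw [wedge_smul_left,
      wedge_z0_eq_zero k z0L (a, 0) (b, 0) (c, 0) (d, 0) habL hcdL hcaL hcbL hdaL hdbL
        hmultL y,
      smul_zero]
  exact ⟨extSqMap_derived_bijective k hkey,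
    not_capable_of_partial_symplectic k z0L (a, 0) (b, 0) (c, 0) (d, 0) hneL habL hcdL
      hacL hadL hbcL hbdL hmultL⟩
end

section
/- Every n-dimensional nilpotent Lie algebra L with dim L² = 1 is isomorphic to H(m) ⊕ A(n − 2m − 1) for some m ≥ 1. -/
open Module Function

universe u v

/-! ### Auxiliary lemmas for the classification theorem -/

section AuxClassification

open Module

variable {k : Type} [Field k]

private lemma aux_dual {L : Type*} [AddCommGroup L] [Module k L]
    (z : L) (hz : z ≠ 0) : ∃ f : L →ₗ[k] k, f z = 1 := by
  obtain ⟨C, hC⟩ := Submodule.exists_isCompl (Submodule.span k {z})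
  refine ⟨(LinearEquiv.toSpanNonzeroSingleton k L z hz).symm.toLinearMap ∘ₗ
    (Submodule.span k {z}).linearProjOfIsCompl C hC, ?_⟩
  have h1 : ((Submodule.span k {z}).linearProjOfIsCompl C hC) z
      = ⟨z, Submodule.mem_span_singleton_self z⟩ :=
    Submodule.linearProjOfIsCompl_apply_left hC ⟨z, Submodule.mem_span_singleton_self z⟩
  simp only [LinearMap.comp_apply, h1]
  have : (LinearEquiv.toSpanNonzeroSingleton k L z hz) 1
      = ⟨z, Submodule.mem_span_singleton_self z⟩ := by
    ext; simp [LinearEquiv.toSpanNonzeroSingleton]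
  rw [← this]
  exact LinearEquiv.symm_apply_apply _ _

private lemma aux_even (k : Type) [Field k] :
    ∀ (n : ℕ) (V : Type u) [AddCommGroup V] [Module k V]
    [FiniteDimensional k V] (B : LinearMap.BilinForm k V), finrank k V = n →
    B.IsAlt → B.Nondegenerate → Even n := by
  intro n
  induction n using Nat.strong_induction_on with
  | _ n IH =>
    intro V _ _ _ B hn halt hnd
    rcases Nat.eq_zero_or_pos n with h0 | hpos
    · simp [h0]
    · have hVnt : Nontrivial V := by
        rw [← Module.finrank_pos_iff (R := k)]; omega
      obtain ⟨x, hx⟩ := exists_ne (0 : V)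
      obtain ⟨y, hxy⟩ : ∃ y, B x y ≠ 0 := by
        by_contra h
        push_neg at h
        exact hx (hnd.1 x (by simpa using h))
      have hyx : B y x ≠ 0 := by
        rw [← halt.neg_eq]; simpa using hxy
      set P : Submodule k V := Submodule.span k {x, y} with hP
      have hxP : x ∈ P := Submodule.subset_span (by simp)
      have hyP : y ∈ P := Submodule.subset_span (by simp)
      have hPnd : (B.restrict P).Nondegenerate := by
        refine (LinearMap.IsRefl.nondegenerate_iff_separatingLeft
          (LinearMap.IsAlt.isRefl (B := B.restrict P) (fun v => halt v))).2 ?_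
        intro ⟨p, hp⟩ hzero
        have h1 : B p x = 0 := hzero ⟨x, hxP⟩
        have h2 : B p y = 0 := hzero ⟨y, hyP⟩
        have hp' : p ∈ Submodule.span k {x, y} := hp
        rw [Submodule.mem_span_pair] at hp'
        obtain ⟨a, b, rfl⟩ := hp'
        simp only [map_add, map_smul, LinearMap.add_apply, LinearMap.smul_apply,
          smul_eq_mul, halt x, halt y] at h1 h2
        have hb : b = 0 := by
          have h1' : b * B y x = 0 := by simpa [halt x] using h1
          rcases mul_eq_zero.1 h1' with h | h
          · exact h
          · exact absurd h hyx
        have ha : a = 0 := by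
          have h2' : a * B x y = 0 := by simpa [halt y] using h2
          rcases mul_eq_zero.1 h2' with h | h
          · exact h
          · exact absurd h hxy
        ext
        simp [ha, hb]
      have hrefl : B.IsRefl := halt.isRefl
      have hcompl : IsCompl P (B.orthogonal P) :=
        LinearMap.BilinForm.isCompl_orthogonal_of_restrict_nondegenerate hrefl hPnd
      have hlin : LinearIndependent k ![x, y] := by
        rw [LinearIndependent.pair_iff]
        intro a b hab
        have h1 : B (a • x + b • y) y = 0 := by rw [hab]; simp
        have h2 : B (a • x + b • y) x = 0 := by rw [hab]; simp
        simp only [map_add, map_smul, LinearMap.add_apply, LinearMap.smul_apply,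
          smul_eq_mul, halt x, halt y] at h1 h2
        have ha : a = 0 := by
          have hh : a * B x y = 0 := by rwa [mul_zero, add_zero] at h1
          rcases mul_eq_zero.1 hh with h | h
          · exact h
          · exact absurd h hxy
        have hb : b = 0 := by
          have hh : b * B y x = 0 := by rwa [mul_zero, zero_add] at h2
          rcases mul_eq_zero.1 hh with h | h
          · exact h
          · exact absurd h hyx
        exact ⟨ha, hb⟩
      have hfP : finrank k P = 2 := by
        have : P = Submodule.span k (Set.range ![x, y]) := by
          rw [hP]
          congr 1
          rw [show Set.range ![x, y] = {y, x} by
            simp [Matrix.range_cons, Matrix.range_empty]]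
          exact (Set.pair_comm x y)
        rw [this, finrank_span_eq_card hlin]
        simp
      have hsum : finrank k P + finrank k (B.orthogonal P) = n := by
        rw [Submodule.finrank_add_eq_of_isCompl hcompl, hn]
      have hOnd : (B.restrict (B.orthogonal P)).Nondegenerate := by
        apply B.nondegenerate_restrict_of_disjoint_orthogonal hrefl
        rw [LinearMap.BilinForm.orthogonal_orthogonal hnd hrefl]
        exact hcompl.disjoint.symm
      have hOalt : (B.restrict (B.orthogonal P)).IsAlt := fun v => halt v
      have hrec := IH (n - 2) (by omega) (B.orthogonal P) (B.restrict (B.orthogonal P))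
        (by omega) hOalt hOnd
      obtain ⟨t, ht⟩ := hrec
      exact ⟨t + 1, by omega⟩

variable (k) in
private lemma aux_central (L : Type u) [LieRing L] [LieAlgebra k L]
    [Module.Finite k L] [LieRing.IsNilpotent L]
    (hd : Module.finrank k (derived k L) = 1) :
    ∀ x ∈ derived k L, ∀ y : L, ⁅y, x⁆ = 0 := by
  set S : ℕ → LieSubmodule k L L := LieModule.lowerCentralSeries k L L with hS
  have h1 : S 1 = derived k L := by
    rw [hS, show (1:ℕ) = 0 + 1 from rfl, LieModule.lowerCentralSeries_succ]; rfl
  have h2 : S 2 = ⁅(⊤ : LieIdeal k L), derived k L⁆ := by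
    rw [hS, show (2:ℕ) = 1 + 1 from rfl, LieModule.lowerCentralSeries_succ, ← hS, h1]
  have hle : S 2 ≤ S 1 := LieModule.antitone_lowerCentralSeries k L L (by norm_num)
  have hne : S 2 ≠ S 1 := by
    intro heq
    have hstab : ∀ n : ℕ, 1 ≤ n → S n = derived k L := by
      intro n hn
      induction n with
      | zero => omega
      | succ m IH =>
        rcases Nat.eq_zero_or_pos m with hm | hm
        · subst hm; exact h1
        · rw [hS, LieModule.lowerCentralSeries_succ, ← hS, IH hm, ← h2, heq, h1]
    obtain ⟨N, hN⟩ := LieModule.IsNilpotent.nilpotent (R := k) (L := L) (M := L)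
    have hNbot : derived k L = ⊥ := by
      rw [← hstab (N + 1) (by omega), hS, LieModule.lowerCentralSeries_succ]
      calc ⁅(⊤ : LieIdeal k L), LieModule.lowerCentralSeries k L L N⁆
          = ⁅(⊤ : LieIdeal k L), (⊥ : LieSubmodule k L L)⁆ := by rw [hN]
        _ = ⊥ := LieSubmodule.lie_bot _
    have hnt : Nontrivial (derived k L) := Module.nontrivial_of_finrank_pos (R := k) (by omega)
    obtain ⟨⟨a, ha⟩, ⟨b, hb⟩, hab⟩ := hnt
    rw [hNbot, LieSubmodule.mem_bot] at ha hb
    exact hab (by simp [ha, hb])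
  have hlt : S 2 < S 1 := lt_of_le_of_ne hle hne
  have hbot : S 2 = ⊥ := by
    have hlt' : (S 2).toSubmodule < (S 1).toSubmodule :=
      lt_of_le_of_ne ((LieSubmodule.toSubmodule_le_toSubmodule _ _).2 hle)
        (fun h => hne (LieSubmodule.toSubmodule_injective h))
    have hfin : Module.finrank k (S 2).toSubmodule < 1 := by
      rw [← hd, ← h1]
      exact Submodule.finrank_lt_finrank_of_lt hlt'
    have h0 : (S 2).toSubmodule = ⊥ := by
      rw [← Submodule.finrank_eq_zero]; omega
    exact LieSubmodule.toSubmodule_injective (by rw [h0]; simp)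
  intro x hx y
  have hmem : ⁅y, x⁆ ∈ S 2 := by
    rw [h2]
    exact LieSubmodule.lie_mem_lie (LieSubmodule.mem_top y) hx
  rw [hbot] at hmem
  simpa using hmem

/-- Build a Lie equivalence from a linear equivalence respecting brackets. -/
private def mkLieEquiv {L₁ : Type*} {L₂ : Type*} [LieRing L₁] [LieAlgebra k L₁]
    [LieRing L₂] [LieAlgebra k L₂] (e : L₁ ≃ₗ[k] L₂)
    (h : ∀ x y, e ⁅x, y⁆ = ⁅e x, e y⁆) : L₁ ≃ₗ⁅k⁆ L₂ :=
  { toLieHom := { toLinearMap := e.toLinearMap, map_lie' := h _ _ }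
    invFun := e.symm
    left_inv := e.left_inv
    right_inv := e.right_inv }

end AuxClassification

/-- every `n`-dimensional nilpotent Lie algebra with one-dimensional derived
subalgebra is isomorphic to `H(m) ⊕ A(n - 2m - 1)` for some `m ≥ 1`. -/
theorem nilpotent_dim_derived_one_classification (k : Type) [Field k] (L : Type u)
    [LieRing L] [LieAlgebra k L] [Module.Finite k L] [LieRing.IsNilpotent L]
    (hd : Module.finrank k (derived k L) = 1) :
    ∃ m : ℕ, 1 ≤ m ∧
      Nonempty (HeisenbergAbelianDecomp k L m (Module.finrank k L - (2 * m + 1))) := by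
  classical
  have hfd : FiniteDimensional k L := ‹Module.Finite k L›
  have hd : finrank k (derived k L).toSubmodule = 1 := hd
  -- a generator of the derived subalgebra
  obtain ⟨z, hzD, hz0, hspan⟩ :
      ∃ z : L, z ∈ derived k L ∧ z ≠ 0 ∧
        (derived k L).toSubmodule = Submodule.span k {z} := by
    have hne : (derived k L).toSubmodule ≠ ⊥ := by
      intro h
      rw [← Submodule.finrank_eq_zero (S := (derived k L).toSubmodule)] at h
      rw [hd] at h; omega
    obtain ⟨z, hzmem, hz0⟩ := Submodule.exists_mem_ne_zero_of_ne_bot hne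
    refine ⟨z, hzmem, hz0, ?_⟩
    have hle : Submodule.span k {z} ≤ (derived k L).toSubmodule := by
      rw [Submodule.span_le, Set.singleton_subset_iff]; exact hzmem
    exact (Submodule.eq_of_le_of_finrank_le hle
      (by rw [hd, finrank_span_singleton hz0])).symm
  have hzc : ∀ y : L, ⁅y, z⁆ = 0 := fun y => aux_central k L hd z hzD y
  obtain ⟨f, hf⟩ := aux_dual (k := k) z hz0
  have hbrmem : ∀ x y : L, ⁅x, y⁆ ∈ Submodule.span k {z} := by
    intro x y
    rw [← hspan]
    exact LieSubmodule.lie_mem_lie (LieSubmodule.mem_top x) (LieSubmodule.mem_top y)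
  -- the structural bilinear form
  set B : LinearMap.BilinForm k L := LinearMap.mk₂ k (fun x y => f ⁅x, y⁆)
    (fun m₁ m₂ n => by
      show f ⁅m₁ + m₂, n⁆ = f ⁅m₁, n⁆ + f ⁅m₂, n⁆
      rw [add_lie, map_add])
    (fun c m n => by
      show f ⁅c • m, n⁆ = c • f ⁅m, n⁆
      rw [smul_lie, map_smul])
    (fun m n₁ n₂ => by
      show f ⁅m, n₁ + n₂⁆ = f ⁅m, n₁⁆ + f ⁅m, n₂⁆
      rw [lie_add, map_add])
    (fun c m n => by
      show f ⁅m, c • n⁆ = c • f ⁅m, n⁆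
      rw [lie_smul, map_smul]) with hB
  have hBapp : ∀ x y : L, B x y = f ⁅x, y⁆ := fun x y => rfl
  have hkey : ∀ x y : L, ⁅x, y⁆ = B x y • z := by
    intro x y
    obtain ⟨c, hc⟩ := Submodule.mem_span_singleton.1 (hbrmem x y)
    have hBc : B x y = c := by
      rw [hBapp, ← hc, map_smul, hf, smul_eq_mul, mul_one]
    rw [hBc, hc]
  have halt : B.IsAlt := by
    intro x
    rw [hBapp, lie_self, map_zero]
  -- the centre as a submodule
  set Zs : Submodule k L := (LieAlgebra.center k L).toSubmodule with hZs
  have hZmem : ∀ x : L, x ∈ Zs ↔ ∀ y : L, ⁅y, x⁆ = 0 := fun x =>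
    Iff.trans (LieSubmodule.mem_toSubmodule _) (LieModule.mem_maxTrivSubmodule k L L x)
  have hZl : ∀ x ∈ Zs, ∀ y : L, ⁅x, y⁆ = 0 := by
    intro x hx y
    rw [← lie_skew, (hZmem x).1 hx y, neg_zero]
  have hzZ : z ∈ Zs := (hZmem z).2 hzc
  have hDZ : Submodule.span k {z} ≤ Zs := by
    rw [Submodule.span_le, Set.singleton_subset_iff]; exact hzZ
  obtain ⟨W, hWc⟩ := Submodule.exists_isCompl Zs
  have hWZ : Zs ⊓ W = ⊥ := hWc.disjoint.eq_bot
  -- B restricted to W is nondegenerate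
  have hBW : (B.restrict W).Nondegenerate := by
    refine (LinearMap.IsRefl.nondegenerate_iff_separatingLeft
      (LinearMap.IsAlt.isRefl (B := B.restrict W) (fun v => halt v))).2 ?_
    rintro ⟨w, hw⟩ hzero
    have hwZ : w ∈ Zs := by
      rw [hZmem]
      intro y
      have hy : y ∈ Zs ⊔ W := by rw [hWc.sup_eq_top]; trivial
      obtain ⟨a, ha, b, hb, rfl⟩ := Submodule.mem_sup.1 hy
      have h1 : ⁅a, w⁆ = 0 := hZl a ha w
      have h2 : ⁅b, w⁆ = 0 := by
        have hbw : B b w = 0 := by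
          have h0 : B w b = 0 := hzero ⟨b, hb⟩
          have := halt.neg_eq w b
          rw [h0, neg_zero] at this
          exact this.symm
        rw [hkey b w, hbw, zero_smul]
      rw [add_lie, h1, h2, add_zero]
    have : w ∈ Zs ⊓ W := ⟨hwZ, hw⟩
    rw [hWZ] at this
    exact Subtype.ext this
  -- W is even-dimensional
  obtain ⟨m, hm⟩ : Even (finrank k W) :=
    aux_even k (finrank k W) W (B.restrict W) rfl (fun v => halt v) hBW
  have hWpos : 0 < finrank k W := by
    rcases Nat.eq_zero_or_pos (finrank k W) with h0 | h
    · exfalso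
      have hWbot : W = ⊥ := by rw [← Submodule.finrank_eq_zero]; exact h0
      have hZtop : Zs = ⊤ := by
        have := hWc.sup_eq_top
        rw [hWbot, sup_bot_eq] at this
        exact this
      have hall : ∀ x y : L, ⁅x, y⁆ = 0 := fun x y =>
        hZl x (by rw [hZtop]; trivial) y
      have hbot : (derived k L).toSubmodule ≤ ⊥ := by
        rw [derived, LieSubmodule.lieIdeal_oper_eq_linear_span, Submodule.span_le]
        rintro v ⟨x, n, rfl⟩
        simp [hall]
      have : z ∈ (⊥ : Submodule k L) := hbot (by
        rw [hspan]; exact Submodule.mem_span_singleton_self z)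
      exact hz0 (by simpa using this)
    · exact h
  have hm1 : 1 ≤ m := by omega
  -- the decomposition
  set D : Submodule k L := Submodule.span k {z} with hDdef
  set Hs : Submodule k L := W ⊔ D with hHs
  obtain ⟨A', hA'⟩ := Submodule.exists_isCompl (Submodule.comap Zs.subtype D)
  set As : Submodule k L := A'.map Zs.subtype with hAsdef
  have hAZ : As ≤ Zs := by
    rw [hAsdef]
    rintro x ⟨a, _, rfl⟩
    exact a.2
  have hDA : D ⊓ As = ⊥ := by
    rw [eq_bot_iff]
    rintro x ⟨hxD, a, haA, rfl⟩
    have : a ∈ Submodule.comap Zs.subtype D ⊓ A' := ⟨hxD, haA⟩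
    rw [hA'.inf_eq_bot] at this
    have ha0 : a = 0 := by simpa using this
    simp [ha0]
  have hDAZ : D ⊔ As = Zs := by
    have h1 : D = Submodule.map Zs.subtype (Submodule.comap Zs.subtype D) := by
      rw [Submodule.map_comap_subtype, inf_eq_right.2 hDZ]
    rw [hAsdef, h1, ← Submodule.map_sup, hA'.sup_eq_top, Submodule.map_top,
      Submodule.range_subtype]
  have hcompl : IsCompl Hs As := by
    constructor
    · rw [disjoint_iff, eq_bot_iff]
      rintro x ⟨hxH, hxA⟩
      have hxZ : x ∈ Zs := hAZ hxA
      obtain ⟨w, hw, d, hdD, rfl⟩ := Submodule.mem_sup.1 hxH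
      have hwZ : w ∈ Zs := by
        have : w = (w + d) - d := by abel
        rw [this]
        exact Submodule.sub_mem _ hxZ (hDZ hdD)
      have hw0 : w = 0 := by
        have : w ∈ Zs ⊓ W := ⟨hwZ, hw⟩
        rwa [hWZ, Submodule.mem_bot] at this
      rw [hw0, zero_add] at hxA ⊢
      have : d ∈ D ⊓ As := ⟨hdD, hxA⟩
      rwa [hDA, Submodule.mem_bot] at this
    · rw [codisjoint_iff, hHs, sup_assoc, hDAZ, sup_comm, hWc.sup_eq_top]
  -- Lie subalgebras
  have hDHs : D ≤ Hs := le_sup_right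
  have hWHs : W ≤ Hs := le_sup_left
  set HL : LieSubalgebra k L :=
    { toSubmodule := Hs
      lie_mem' := fun {x y} _ _ => hDHs (hbrmem x y) } with hHL
  set AL : LieSubalgebra k L :=
    { toSubmodule := As
      lie_mem' := fun {x y} hx _ => by
        rw [hZl x (hAZ hx) y]; exact zero_mem As } with hAL
  have habel : IsLieAbelian AL := by
    constructor
    intro a b
    apply Subtype.ext
    show ⁅(a : L), (b : L)⁆ = 0
    exact hZl a.1 (hAZ a.2) b.1
  -- dimension bookkeeping
  have hWD : W ⊓ D = ⊥ := by
    rw [eq_bot_iff]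
    rintro x ⟨hxW, hxD⟩
    have : x ∈ Zs ⊓ W := ⟨hDZ hxD, hxW⟩
    rwa [hWZ] at this
  have hfinD : finrank k D = 1 := finrank_span_singleton hz0
  have hfinH : finrank k Hs = 2 * m + 1 := by
    have := Submodule.finrank_sup_add_finrank_inf_eq W D
    rw [hWD] at this
    simp only [finrank_bot] at this
    rw [hHs]
    omega
  have hfinA : finrank k As = finrank k L - (2 * m + 1) := by
    have := Submodule.finrank_add_eq_of_isCompl hcompl
    have hle : 2 * m + 1 ≤ finrank k L := by omega
    omega
  -- the Lie algebra equivalence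
  have hAcentral : ∀ a ∈ As, ∀ y : L, ⁅y, a⁆ = 0 := fun a ha y =>
    (hZmem a).1 (hAZ ha) y
  have hAcentral' : ∀ a ∈ As, ∀ y : L, ⁅a, y⁆ = 0 := fun a ha y => hZl a (hAZ ha) y
  have hcompl' : IsCompl HL.toSubmodule AL.toSubmodule := hcompl
  have hequiv : Nonempty (L ≃ₗ⁅k⁆ ↥HL × ↥AL) := by
    refine ⟨(mkLieEquiv (Submodule.prodEquivOfIsCompl HL.toSubmodule AL.toSubmodule hcompl')
      ?_).symm⟩
    rintro ⟨xh, xa⟩ ⟨yh, ya⟩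
    show ((⁅xh, yh⁆ : HL) : L) + ((⁅xa, ya⁆ : AL) : L) =
      ⁅(xh : L) + (xa : L), (yh : L) + (ya : L)⁆
    rw [add_lie, lie_add, lie_add]
    rw [hAcentral ya.1 ya.2 xh.1, hAcentral' xa.1 xa.2 yh.1, hAcentral' xa.1 xa.2 ya.1]
    show ⁅(xh : L), (yh : L)⁆ + ⁅(xa : L), (ya : L)⁆ = _
    rw [hAcentral' xa.1 xa.2 ya.1]
    abel
  -- the Heisenberg structure on HL
  have hzH : z ∈ HL := hDHs (Submodule.mem_span_singleton_self z)
  set zH : HL := ⟨z, hzH⟩ with hzHdef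
  have hzH0 : zH ≠ 0 := fun h => hz0 (congrArg Subtype.val h)
  have hWne : W ≠ ⊥ := by
    intro h
    rw [h, finrank_bot] at hWpos
    omega
  have hderH : (derived k HL).toSubmodule = Submodule.span k {zH} := by
    apply le_antisymm
    · rw [derived, LieSubmodule.lieIdeal_oper_eq_linear_span, Submodule.span_le]
      rintro v ⟨x, n, rfl⟩
      rw [SetLike.mem_coe, Submodule.mem_span_singleton]
      refine ⟨B (((x : HL)) : L) (((n : HL)) : L), ?_⟩
      apply Subtype.ext
      show B (((x : HL)) : L) (((n : HL)) : L) • z = ((⁅(x : HL), (n : HL)⁆ : HL) : L)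
      rw [LieSubalgebra.coe_bracket]
      exact (hkey _ _).symm
    · rw [Submodule.span_le, Set.singleton_subset_iff]
      obtain ⟨w, hw, hw0⟩ := Submodule.exists_mem_ne_zero_of_ne_bot hWne
      obtain ⟨w', hw', hBww'⟩ : ∃ w' ∈ W, B w w' ≠ 0 := by
        by_contra h
        push_neg at h
        apply hw0
        have h0 : (⟨w, hw⟩ : W) = 0 := hBW.1 ⟨w, hw⟩ (fun n => by
          simpa using h n.1 n.2)
        exact congrArg Subtype.val h0
      have hbr : ⁅(⟨w, hWHs hw⟩ : HL), (⟨w', hWHs hw'⟩ : HL)⁆ ∈ derived k HL :=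
        LieSubmodule.lie_mem_lie (LieSubmodule.mem_top _) (LieSubmodule.mem_top _)
      have hzeq : zH = (B w w')⁻¹ • ⁅(⟨w, hWHs hw⟩ : HL), (⟨w', hWHs hw'⟩ : HL)⁆ := by
        apply Subtype.ext
        show z = (B w w')⁻¹ • ((⁅(⟨w, hWHs hw⟩ : HL), (⟨w', hWHs hw'⟩ : HL)⁆ : HL) : L)
        rw [LieSubalgebra.coe_bracket]
        show z = (B w w')⁻¹ • ⁅w, w'⁆
        rw [hkey w w', smul_smul, inv_mul_cancel₀ hBww', one_smul]
      rw [SetLike.mem_coe, hzeq]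
      exact Submodule.smul_mem _ _ ((LieSubmodule.mem_toSubmodule _).2 hbr)
  have hcenH : (LieAlgebra.center k HL).toSubmodule = Submodule.span k {zH} := by
    apply le_antisymm
    · intro x hx
      have hx' : ∀ yH : HL, ⁅yH, x⁆ = 0 :=
        (LieModule.mem_maxTrivSubmodule k HL HL x).1 ((LieSubmodule.mem_toSubmodule _).1 hx)
      obtain ⟨w, hw, d, hdD, hxwd⟩ := Submodule.mem_sup.1 x.2
      have hdZ : d ∈ Zs := hDZ hdD
      have hw0 : w = 0 := by
        have hall : ∀ w' ∈ W, B w w' = 0 := by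
          intro w' hw'
          have h1 : ⁅x, (⟨w', hWHs hw'⟩ : HL)⁆ = 0 := by
            rw [← lie_skew, hx' ⟨w', hWHs hw'⟩, neg_zero]
          have h2 : ⁅(x : L), w'⁆ = 0 := by
            have := congrArg (Subtype.val) h1
            rwa [LieSubalgebra.coe_bracket] at this
          have h3 : ⁅w, w'⁆ = 0 := by
            rw [← hxwd, add_lie, hZl d hdZ w', add_zero] at h2
            exact h2
          have h4 : B w w' • z = 0 := by rw [← hkey w w']; exact h3
          rcases smul_eq_zero.1 h4 with h | h
          · exact h
          · exact absurd h hz0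
        have h0 : (⟨w, hw⟩ : W) = 0 := hBW.1 ⟨w, hw⟩ (fun n => by
          simpa using hall n.1 n.2)
        exact congrArg Subtype.val h0
      have hxD : (x : L) ∈ D := by rw [← hxwd, hw0, zero_add]; exact hdD
      obtain ⟨c, hc⟩ := Submodule.mem_span_singleton.1 hxD
      rw [Submodule.mem_span_singleton]
      refine ⟨c, Subtype.ext ?_⟩
      show c • z = (x : L)
      exact hc
    · rw [Submodule.span_le, Set.singleton_subset_iff, SetLike.mem_coe]
      apply (LieSubmodule.mem_toSubmodule _).2
      exact (LieModule.mem_maxTrivSubmodule k HL HL zH).2 (fun yH =>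
        Subtype.ext (by
          rw [LieSubalgebra.coe_bracket]
          exact hzc yH.1))
  have hheis : IsHeisenberg k HL m := by
    refine ⟨LieSubmodule.toSubmodule_injective (hderH.trans hcenH.symm), ?_, ?_⟩
    · exact hfinH
    · show finrank k (derived k HL).toSubmodule = 1
      rw [hderH]
      exact finrank_span_singleton hzH0
  exact ⟨m, hm1, ⟨{
    H := HL
    A := AL
    heis := hheis
    abel := habel
    dimA := hfinA
    equiv := hequiv }⟩⟩
end

section
/- If L is a finite-dimensional Lie algebra and N ⊆ Z*(L) is an ideal, then dim M(L/Z*(L)) = dim M(L) + dim(L² ∩ Z*(L)), where M denotes the Schur multiplier. -/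
open Module Function

universe u v

section Aux
variable (k : Type) [Field k] (L : Type u) [LieRing L] [LieAlgebra k L]

lemma pres_surjective : Function.Surjective (pres k L) := fun x =>
  ⟨FreeLieAlgebra.of k x, FreeLieAlgebra.lift_of_apply id x⟩

lemma mem_ker_presQ (N : LieIdeal k L) (x : FreeLieAlgebra k L) :
    x ∈ (presQ k L N).ker ↔ pres k L x ∈ N := by
  rw [LieHom.mem_ker]
  show lieQuotMk k L N (pres k L x) = 0 ↔ _
  show (N : Submodule k L).mkQ (pres k L x) = 0 ↔ _
  rw [Submodule.mkQ_apply, Submodule.Quotient.mk_eq_zero]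
  exact Iff.rfl

end Aux
section Aux2
variable (k : Type) [Field k] (L : Type u) [LieRing L] [LieAlgebra k L]

lemma lie_kerQ_eq :
    (⁅(presQ k L (epicenter k L)).ker, (⊤ : LieIdeal k (FreeLieAlgebra k L))⁆ :
        LieIdeal k (FreeLieAlgebra k L)) =
      ⁅(pres k L).ker, (⊤ : LieIdeal k (FreeLieAlgebra k L))⁆ := by
  refine le_antisymm ?_ (LieSubmodule.mono_lie_left _ (ker_le_kerQ k L _))
  set F := FreeLieAlgebra k L
  set T : LieIdeal k F := ⁅(pres k L).ker, (⊤ : LieIdeal k F)⁆ with hT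
  have hTker : T ≤ (pres k L).ker := LieSubmodule.lie_le_left _ _
  let φ : (F ⧸ T) →ₗ⁅k⁆ L := lieQuotLift T (pres k L) hTker
  have hmk : ∀ f : F, φ (lieQuotMk k F T f) = pres k L f := fun f => rfl
  have hφs : Function.Surjective φ := by
    intro x
    obtain ⟨f, hf⟩ := pres_surjective k L x
    exact ⟨lieQuotMk k F T f, by rw [hmk, hf]⟩
  have hkerc : φ.ker ≤ LieAlgebra.center k (F ⧸ T) := by
    intro x hx
    obtain ⟨f, rfl⟩ : ∃ f, lieQuotMk k F T f = x :=
      (Submodule.Quotient.mk_surjective (T : Submodule k F)) x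
    rw [LieHom.mem_ker, hmk, ← LieHom.mem_ker] at hx
    rw [LieModule.mem_maxTrivSubmodule]
    intro y
    obtain ⟨g, rfl⟩ : ∃ g, lieQuotMk k F T g = y :=
      (Submodule.Quotient.mk_surjective (T : Submodule k F)) y
    rw [← LieHom.map_lie]
    show (T : Submodule k F).mkQ ⁅g, f⁆ = 0
    rw [Submodule.mkQ_apply, Submodule.Quotient.mk_eq_zero]
    have : ⁅f, g⁆ ∈ T := LieSubmodule.lie_mem_lie hx trivial
    have h2 : -⁅f, g⁆ ∈ T := neg_mem this
    rwa [lie_skew g f] at h2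
  have hZmap : epicenter k L ≤ LieIdeal.map φ (LieAlgebra.center k (F ⧸ T)) := by
    apply sInf_le
    refine ⟨F ⧸ T, inferInstance, inferInstance, φ, ⟨hφs, hkerc⟩, ?_⟩
    have := LieIdeal.coe_map_of_surjective (I := LieAlgebra.center k (F ⧸ T)) hφs
    calc (LieIdeal.map φ (LieAlgebra.center k (F ⧸ T)) : Set L)
        = ((LieSubmodule.toSubmodule (LieIdeal.map φ (LieAlgebra.center k (F ⧸ T)))) :
            Set L) := rfl
      _ = _ := by rw [this]; rfl
  rw [LieSubmodule.lieIdeal_oper_eq_span, LieSubmodule.lieSpan_le]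
  rintro z ⟨⟨x, hx⟩, ⟨y, -⟩, rfl⟩
  rw [mem_ker_presQ] at hx
  have hx' := hZmap hx
  rw [← LieSubmodule.mem_toSubmodule, LieIdeal.coe_map_of_surjective hφs,
    Submodule.mem_map] at hx'
  obtain ⟨e, he, heq⟩ := hx'
  rw [LieHom.coe_toLinearMap] at heq
  rw [LieSubmodule.mem_toSubmodule] at he
  have hd : lieQuotMk k F T x - e ∈ φ.ker := by
    rw [LieHom.mem_ker, map_sub, hmk, heq, sub_self]
  have hdc := hkerc hd
  show ⁅x, y⁆ ∈ T
  have : lieQuotMk k F T ⁅x, y⁆ = 0 := by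
    rw [LieHom.map_lie]
    have hxe : lieQuotMk k F T x = (lieQuotMk k F T x - e) + e := (sub_add_cancel _ _).symm
    rw [hxe, add_lie]
    rw [LieModule.mem_maxTrivSubmodule] at hdc he
    have h1 : ⁅lieQuotMk k F T x - e, lieQuotMk k F T y⁆ = 0 := by
      rw [← lie_skew, hdc, neg_zero]
    have h2 : ⁅e, lieQuotMk k F T y⁆ = 0 := by
      rw [← lie_skew, he, neg_zero]
    rw [h1, h2, add_zero]
  rwa [show lieQuotMk k F T ⁅x, y⁆ = (LieSubmodule.toSubmodule T).mkQ ⁅x, y⁆ from rfl,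
    Submodule.mkQ_apply, Submodule.Quotient.mk_eq_zero] at this

end Aux2
section Aux3
variable (k : Type) [Field k] (L : Type u) [LieRing L] [LieAlgebra k L]

/-- The submodule `⁅R, F⁆` of the free Lie algebra, `R = ker (pres)`. -/
noncomputable def kerBr : Submodule k (FreeLieAlgebra k L) :=
  (⁅(pres k L).ker, (⊤ : LieIdeal k (FreeLieAlgebra k L))⁆ :
    LieIdeal k (FreeLieAlgebra k L)).toSubmodule

lemma lie_mem_kerBr {f g : FreeLieAlgebra k L} (hf : f ∈ (pres k L).ker) :
    ⁅f, g⁆ ∈ kerBr k L :=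
  LieSubmodule.lie_mem_lie hf trivial

lemma mkQ_lie_congr {f f' g g' : FreeLieAlgebra k L}
    (h1 : pres k L f = pres k L f') (h2 : pres k L g = pres k L g') :
    (kerBr k L).mkQ ⁅f, g⁆ = (kerBr k L).mkQ ⁅f', g'⁆ := by
  rw [Submodule.mkQ_apply, Submodule.mkQ_apply, Submodule.Quotient.eq]
  have key : ⁅f, g⁆ - ⁅f', g'⁆ = ⁅f - f', g⁆ + ⁅f', g - g'⁆ := by
    rw [sub_lie, lie_sub]; abel
  rw [key]
  have m1 : ⁅f - f', g⁆ ∈ kerBr k L :=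
    lie_mem_kerBr k L (by rw [LieHom.mem_ker, map_sub, h1, sub_self])
  have m2 : ⁅f', g - g'⁆ ∈ kerBr k L := by
    rw [← lie_skew]
    exact neg_mem (lie_mem_kerBr k L
      (by rw [LieHom.mem_ker, map_sub, h2, sub_self]))
  exact add_mem m1 m2

/-- The well-defined bilinear map `L × L → F ⧸ ⁅R, F⁆`, `(x, y) ↦ ⁅σx, σy⁆`. -/
noncomputable def wmap : L →ₗ[k] L →ₗ[k] (FreeLieAlgebra k L ⧸ kerBr k L) :=
  LinearMap.mk₂ k
    (fun x y => (kerBr k L).mkQ ⁅FreeLieAlgebra.of k x, FreeLieAlgebra.of k y⁆)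
    (fun x x' y => by
      rw [mkQ_lie_congr k L (f' := FreeLieAlgebra.of k x + FreeLieAlgebra.of k x')
        (g' := FreeLieAlgebra.of k y) (by simp [pres, FreeLieAlgebra.lift_of_apply]) rfl,
        add_lie, map_add])
    (fun c x y => by
      rw [mkQ_lie_congr k L (f' := c • FreeLieAlgebra.of k x)
        (g' := FreeLieAlgebra.of k y) (by simp [pres, FreeLieAlgebra.lift_of_apply]) rfl,
        smul_lie, map_smul])
    (fun x y y' => by
      rw [mkQ_lie_congr k L (f' := FreeLieAlgebra.of k x)
        (g' := FreeLieAlgebra.of k y + FreeLieAlgebra.of k y') rfl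
        (by simp [pres, FreeLieAlgebra.lift_of_apply]),
        lie_add, map_add])
    (fun c x y => by
      rw [mkQ_lie_congr k L (f' := FreeLieAlgebra.of k x)
        (g' := c • FreeLieAlgebra.of k y) rfl
        (by simp [pres, FreeLieAlgebra.lift_of_apply]),
        ← lie_skew, smul_lie, map_neg, map_smul, ← smul_neg, ← map_neg, lie_skew])

lemma mkQ_lie_eq_wmap (f g : FreeLieAlgebra k L) :
    (kerBr k L).mkQ ⁅f, g⁆ = wmap k L (pres k L f) (pres k L g) := by
  have : wmap k L (pres k L f) (pres k L g) =
      (kerBr k L).mkQ ⁅FreeLieAlgebra.of k (pres k L f),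
        FreeLieAlgebra.of k (pres k L g)⁆ := rfl
  rw [this]
  exact mkQ_lie_congr k L
    (by rw [pres, FreeLieAlgebra.lift_of_apply]; rfl)
    (by rw [pres, FreeLieAlgebra.lift_of_apply]; rfl)

lemma derived_map_le :
    Submodule.map (kerBr k L).mkQ (derived k (FreeLieAlgebra k L)).toSubmodule ≤
      LinearMap.range (TensorProduct.lift (wmap k L)) := by
  rw [derived, LieSubmodule.lieIdeal_oper_eq_linear_span', Submodule.map_span,
    Submodule.span_le]
  rintro _ ⟨m, ⟨x, -, y, -, rfl⟩, rfl⟩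
  exact ⟨pres k L x ⊗ₜ pres k L y, by
    rw [TensorProduct.lift.tmul]; exact (mkQ_lie_eq_wmap k L x y).symm⟩

lemma finW [Module.Finite k L] :
    FiniteDimensional k
      ↥(Submodule.map (kerBr k L).mkQ (derived k (FreeLieAlgebra k L)).toSubmodule) := by
  have : Module.Finite k (TensorProduct k L L) := inferInstance
  have : FiniteDimensional k ↥(LinearMap.range (TensorProduct.lift (wmap k L))) :=
    Module.Finite.range _
  exact Submodule.finiteDimensional_of_le (derived_map_le k L)

end Aux3
/-- if `N ⊆ Z^*(L)` is an ideal then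
`dim M(L/Z^*(L)) = dim M(L) + dim (L² ∩ Z^*(L))`. -/
theorem dim_mult_quotient_epicenter (k : Type) [Field k] (L : Type u) [LieRing L]
    [LieAlgebra k L] [Module.Finite k L] (N : LieIdeal k L) (hN : N ≤ epicenter k L) :
    Module.finrank k (multOf k L (presQ k L (epicenter k L))) =
      Module.finrank k (SchurMultiplier k L) +
        Module.finrank k ↥(derived k L ⊓ epicenter k L) := by
  classical
  set F := FreeLieAlgebra k L with hF
  set T : Submodule k F := kerBr k L with hTdef
  set A : Submodule k F := ((pres k L).ker ⊓ derived k F).toSubmodule with hAdef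
  set B : Submodule k F :=
    ((presQ k L (epicenter k L)).ker ⊓ derived k F).toSubmodule with hBdef
  -- T is contained in ker pres
  have hTR : T ≤ ((pres k L).ker : Submodule k F) := by
    rw [hTdef]
    exact (LieSubmodule.toSubmodule_le_toSubmodule _ _).2
      (LieSubmodule.lie_le_left (pres k L).ker ⊤)
  -- rewrite the LHS module
  have hTT : ((⁅(presQ k L (epicenter k L)).ker,
      (⊤ : LieIdeal k F)⁆ : LieIdeal k F) : Submodule k F) = T :=
    congrArg LieSubmodule.toSubmodule (lie_kerQ_eq k L)
  have e1 : Module.finrank k (multOf k L (presQ k L (epicenter k L))) =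
      Module.finrank k (B ⧸ T.comap B.subtype) :=
    LinearEquiv.finrank_eq (Submodule.quotEquivOfEq _ _ (congrArg (Submodule.comap B.subtype) hTT))
  -- B is contained in F²
  have hBF : B ≤ (derived k F).toSubmodule := by
    rw [hBdef, LieSubmodule.inf_toSubmodule]; exact inf_le_right
  -- finite dimensionality of B ⧸ T
  have hkerj : LinearMap.ker (T.mkQ ∘ₗ B.subtype) = T.comap B.subtype := by
    rw [LinearMap.ker_comp, Submodule.ker_mkQ]
  let j : (B ⧸ T.comap B.subtype) →ₗ[k] F ⧸ T :=
    (T.comap B.subtype).liftQ (T.mkQ ∘ₗ B.subtype) hkerj.ge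
  have hjinj : Function.Injective j :=
    LinearMap.ker_eq_bot.1 (Submodule.ker_liftQ_eq_bot _ _ _ hkerj.le)
  have hjrange : LinearMap.range j = B.map T.mkQ := by
    rw [Submodule.range_liftQ, LinearMap.range_comp, Submodule.range_subtype]
  have hW : FiniteDimensional k ↥(Submodule.map T.mkQ (derived k F).toSubmodule) :=
    finW k L
  have hfinj : FiniteDimensional k ↥(LinearMap.range j) := by
    rw [hjrange]
    exact Submodule.finiteDimensional_of_le (Submodule.map_mono hBF)
  have hfin : FiniteDimensional k (B ⧸ T.comap B.subtype) :=
    Module.Finite.equiv (LinearEquiv.ofInjective j hjinj).symm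
  -- the map g : B ⧸ T → L induced by pres
  have hgker : T.comap B.subtype ≤
      LinearMap.ker ((pres k L).toLinearMap ∘ₗ B.subtype) := by
    intro x hx
    have : ((x : F)) ∈ T := hx
    have h0 : (x : F) ∈ ((pres k L).ker : Submodule k F) := hTR this
    simpa using h0
  let g : (B ⧸ T.comap B.subtype) →ₗ[k] L :=
    (T.comap B.subtype).liftQ ((pres k L).toLinearMap ∘ₗ B.subtype) hgker
  -- the image of F² under pres is L²
  have hsurj := pres_surjective k L
  have htop : LieIdeal.map (pres k L) ⊤ = ⊤ := by
    rw [← LieSubmodule.toSubmodule_inj, LieIdeal.coe_map_of_surjective hsurj]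
    rw [LieSubmodule.top_toSubmodule, LieSubmodule.top_toSubmodule, Submodule.map_top, LinearMap.range_eq_top]
    exact hsurj
  have hmapd : Submodule.map (pres k L).toLinearMap (derived k F).toSubmodule =
      (derived k L).toSubmodule := by
    have h1 : LieIdeal.map (pres k L) (derived k F) = derived k L := by
      rw [derived, derived, LieIdeal.map_bracket_eq _ hsurj, htop]
    rw [← LieIdeal.coe_map_of_surjective hsurj, h1]
  -- range of g
  have hrange : LinearMap.range g = (derived k L ⊓ epicenter k L).toSubmodule := by
    rw [show LinearMap.range g = B.map (pres k L).toLinearMap by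
      rw [Submodule.range_liftQ, LinearMap.range_comp, Submodule.range_subtype]]
    apply le_antisymm
    · rintro _ ⟨b, hb, rfl⟩
      have hb' : b ∈ (presQ k L (epicenter k L)).ker ⊓ derived k F := hb
      rw [LieSubmodule.mem_inf] at hb'
      show pres k L b ∈ derived k L ⊓ epicenter k L
      rw [LieSubmodule.mem_inf]
      refine ⟨?_, (mem_ker_presQ k L _ b).1 hb'.1⟩
      show pres k L b ∈ (derived k L).toSubmodule
      rw [← hmapd]
      exact Submodule.mem_map_of_mem hb'.2
    · rintro x hx
      have hx' : x ∈ derived k L ⊓ epicenter k L := hx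
      rw [LieSubmodule.mem_inf] at hx'
      have hx2 : x ∈ Submodule.map (pres k L).toLinearMap
          (derived k F).toSubmodule := by
        rw [hmapd]; exact hx'.1
      obtain ⟨f, hf, rfl⟩ := hx2
      exact Submodule.mem_map_of_mem
        (show f ∈ (presQ k L (epicenter k L)).ker ⊓ derived k F from
          (LieSubmodule.mem_inf _ _ _).mpr ⟨(mem_ker_presQ k L _ f).2 hx'.2, hf⟩)
  -- the injection h : M(L) → B ⧸ T
  have hAB : A ≤ B := by
    rw [hAdef, hBdef]
    exact (LieSubmodule.toSubmodule_le_toSubmodule _ _).2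
      (inf_le_inf_right _ (ker_le_kerQ k L _))
  let h : (A ⧸ T.comap A.subtype) →ₗ[k] (B ⧸ T.comap B.subtype) :=
    Submodule.mapQ _ _ (Submodule.inclusion hAB)
      (show T.comap A.subtype ≤ (T.comap B.subtype).comap (Submodule.inclusion hAB) from
        fun x hx => hx)
  have hinj : Function.Injective h := by
    rw [← LinearMap.ker_eq_bot]
    rw [Submodule.eq_bot_iff]
    intro x hx
    obtain ⟨a, rfl⟩ := Submodule.Quotient.mk_surjective _ x
    rw [LinearMap.mem_ker] at hx
    dsimp only [h] at hx
    rw [Submodule.mapQ_apply] at hx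
    rw [Submodule.Quotient.mk_eq_zero] at hx ⊢
    exact hx
  have hrangeh : LinearMap.range h = LinearMap.ker g := by
    ext x
    constructor
    · rintro ⟨y, rfl⟩
      obtain ⟨a, rfl⟩ := Submodule.Quotient.mk_surjective _ y
      rw [LinearMap.mem_ker]
      dsimp only [h]
      rw [Submodule.mapQ_apply]
      show (pres k L) ((Submodule.inclusion hAB a : B) : F) = 0
      have ha : (a : F) ∈ (pres k L).ker ⊓ derived k F := a.2
      rw [LieSubmodule.mem_inf] at ha
      exact ha.1
    · intro hx
      obtain ⟨b, rfl⟩ := Submodule.Quotient.mk_surjective _ x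
      rw [LinearMap.mem_ker] at hx
      have hb0 : pres k L (b : F) = 0 := hx
      have hb : (b : F) ∈ (presQ k L (epicenter k L)).ker ⊓ derived k F := b.2
      rw [LieSubmodule.mem_inf] at hb
      have haA : (b : F) ∈ A :=
        show (b : F) ∈ (pres k L).ker ⊓ derived k F from
          (LieSubmodule.mem_inf _ _ _).mpr ⟨by rwa [LieHom.mem_ker], hb.2⟩
      refine ⟨Submodule.Quotient.mk (⟨(b : F), haA⟩ : A), ?_⟩
      dsimp only [h]
      rw [Submodule.mapQ_apply]
      congr 1
  -- rank-nullity
  have hrn := LinearMap.finrank_range_add_finrank_ker g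
  have hkerfin : Module.finrank k ↥(LinearMap.ker g) =
      Module.finrank k (SchurMultiplier k L) := by
    have := LinearEquiv.finrank_eq (LinearEquiv.ofInjective h hinj)
    rw [hrangeh] at this
    exact this.symm
  have hrangefin : Module.finrank k ↥(LinearMap.range g) =
      Module.finrank k ↥(derived k L ⊓ epicenter k L) := by
    rw [hrange]; rfl
  rw [e1, ← hrn, hkerfin, hrangefin, add_comm]
end
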